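/- Let G be a set of positive integers with convergent reciprocal sum, and for real z let A_z = {n odd : every g ∈ G with g ∣ n satisfies g ≤ z and {g ∈ G ∩ [1,z] : g ∣ n} = H} for a fixed finite H ⊆ G with max H < z. Then A := {n odd : {g ∈ G : g ∣ n} = H} satisfies: d(A_z) exists for each z, is nonincreasing in z, A ⊆ A_{z'} ⊆ A_z for z' > z > max H, and the upper density of A_z \ A is at most ∑_{g ∈ G, g > z} 1/g. Consequently d(A) exists and equals lim_{z→∞} d(A_z). -/

import Mathlib

open Filter

/-- The number of elements of `S` lying in `[1, x]`. -/
noncomputable def countIn (S : Set ℕ) (x : ℕ) : ℕ := (S ∩ Set.Icc 1 x).ncard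

/-- `S` has asymptotic density `δ`. -/
def HasDensity (S : Set ℕ) (δ : ℝ) : Prop :=
  Tendsto (fun x : ℕ => (countIn S x : ℝ) / x) atTop (nhds δ)

/-- The upper asymptotic density of `S`. -/
noncomputable def upperDensity (S : Set ℕ) : ℝ :=
  limsup (fun x : ℕ => (countIn S x : ℝ) / x) atTop

/-- For `z : ℝ`, the set `A_z` of odd `n` all of whose divisors from `G` are at most `z`
and whose set of divisors from `G ∩ [1,z]` equals `H`. -/
def Az (G : Set ℕ) (H : Finset ℕ) (z : ℝ) : Set ℕ :=
  {n : ℕ | Odd n ∧ (∀ g ∈ G, g ∣ n → (g : ℝ) ≤ z) ∧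
    {g ∈ G | (g : ℝ) ≤ z ∧ g ∣ n} = ↑H}

/-- The set `A` of odd `n` whose set of divisors from `G` equals `H`. -/
def Aset (G : Set ℕ) (H : Finset ℕ) : Set ℕ := {n : ℕ | Odd n ∧ {g ∈ G | g ∣ n} = ↑H}

section Helpers

open Finset
open scoped Classical

lemma countIn_eq_card (S : Set ℕ) (x : ℕ) :
    countIn S x = ((Finset.Ioc 0 x).filter (· ∈ S)).card := by
  rw [countIn, ← Set.ncard_coe_finset]
  congr 1
  ext n
  simp only [Finset.coe_filter, Finset.mem_Ioc, Set.mem_setOf_eq, Set.mem_inter_iff,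
    Set.mem_Icc]
  constructor
  · rintro ⟨h1, h2⟩; exact ⟨⟨h2.1, h2.2⟩, h1⟩
  · rintro ⟨⟨h1, h2⟩, h3⟩; exact ⟨h3, h1, h2⟩

lemma countIn_mono (S : Set ℕ) {x y : ℕ} (h : x ≤ y) : countIn S x ≤ countIn S y := by
  rw [countIn_eq_card, countIn_eq_card]
  exact Finset.card_le_card (Finset.filter_subset_filter _ (Finset.Ioc_subset_Ioc le_rfl h))

lemma countIn_le_of_subset {S T : Set ℕ} (h : S ⊆ T) (x : ℕ) : countIn S x ≤ countIn T x := by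
  rw [countIn_eq_card, countIn_eq_card]
  apply Finset.card_le_card
  intro n hn
  simp only [Finset.mem_filter] at *
  exact ⟨hn.1, h hn.2⟩

lemma countIn_union_le (S T : Set ℕ) (x : ℕ) :
    countIn (S ∪ T) x ≤ countIn S x + countIn T x := by
  rw [countIn_eq_card, countIn_eq_card, countIn_eq_card]
  refine le_trans (Finset.card_le_card ?_) (Finset.card_union_le
    ((Finset.Ioc 0 x).filter (· ∈ S)) ((Finset.Ioc 0 x).filter (· ∈ T)))
  intro n hn
  simp only [Finset.mem_filter, Finset.mem_union, Set.mem_union] at *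
  tauto

lemma periodic_add (S : Set ℕ) (m : ℕ) (hper : ∀ n, n ∈ S ↔ n + m ∈ S) (k n : ℕ) :
    n ∈ S ↔ n + k * m ∈ S := by
  induction k with
  | zero => simp
  | succ k ih =>
    rw [ih, hper (n + k * m)]
    ring_nf

lemma count_shift (S : Set ℕ) (m : ℕ) (hper : ∀ n, n ∈ S ↔ n + m ∈ S) (a b : ℕ) :
    ((Finset.Ioc (a + m) (b + m)).filter (· ∈ S)).card
      = ((Finset.Ioc a b).filter (· ∈ S)).card := by
  rw [← Finset.map_add_right_Ioc, Finset.filter_map, Finset.card_map]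
  congr 1
  ext n
  rw [Finset.mem_filter]
  simp [addRightEmbedding, (hper n).symm]

lemma count_mul (S : Set ℕ) (m : ℕ) (hper : ∀ n, n ∈ S ↔ n + m ∈ S) (k : ℕ) :
    countIn S (k * m) = k * countIn S m := by
  induction k with
  | zero => simp [countIn_eq_card]
  | succ k ih =>
    rw [countIn_eq_card] at *
    have hsplit : Finset.Ioc 0 ((k+1) * m) = Finset.Ioc 0 (k*m) ∪ Finset.Ioc (k*m) ((k+1)*m) := by
      rw [Finset.Ioc_union_Ioc_eq_Ioc (Nat.zero_le _) (by nlinarith)]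
    rw [hsplit, Finset.filter_union, Finset.card_union_of_disjoint, ih]
    · have hsh := count_shift S (k * m) (periodic_add S m hper k) 0 m
      rw [zero_add, show m + k * m = (k+1) * m by ring] at hsh
      rw [hsh, countIn_eq_card]
      ring
    · apply Finset.disjoint_filter_filter
      rw [Finset.disjoint_left]
      intro n hn hn'
      simp only [Finset.mem_Ioc] at hn hn'
      omega

lemma periodic_hasDensity (S : Set ℕ) (m : ℕ) (hm : 0 < m)
    (hper : ∀ n, n ∈ S ↔ n + m ∈ S) :
    HasDensity S ((countIn S m : ℝ) / m) := by
  set c := countIn S m with hc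
  have hm0 : (0:ℝ) < m := by exact_mod_cast hm
  have key : ∀ x : ℕ, 1 ≤ x → |(countIn S x : ℝ) / x - c / m| ≤ c / x := by
    intro x hx
    have hx0 : (0:ℝ) < x := by exact_mod_cast hx
    set q := x / m with hqdef
    have hq1 : q * m ≤ x := Nat.div_mul_le_self x m
    have hq2 : x < (q + 1) * m := by
      have h1 := Nat.div_add_mod x m
      have h2 := Nat.mod_lt x hm
      have h3 : (q + 1) * m = m * (x / m) + m := by rw [hqdef]; ring
      rw [h3]; linarith
    have hlo : q * c ≤ countIn S x := by
      rw [← count_mul S m hper]; exact countIn_mono S hq1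
    have hhi : countIn S x ≤ (q + 1) * c := by
      rw [← count_mul S m hper]; exact countIn_mono S hq2.le
    have hq1R : (q:ℝ) * m ≤ x := by exact_mod_cast hq1
    have hq2R : (x:ℝ) ≤ ((q:ℝ) + 1) * m := by exact_mod_cast hq2.le
    have hloR : (q:ℝ) * c ≤ (countIn S x : ℝ) := by exact_mod_cast hlo
    have hhiR : (countIn S x : ℝ) ≤ ((q:ℝ) + 1) * c := by exact_mod_cast hhi
    have hc0 : (0:ℝ) ≤ c := Nat.cast_nonneg c
    have ha : (countIn S x : ℝ) * m ≤ c * x + c * m := by nlinarith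
    have hb : (c:ℝ) * x ≤ (countIn S x : ℝ) * m + c * m := by nlinarith
    rw [abs_sub_le_iff]
    constructor
    · rw [div_sub_div _ _ hx0.ne' hm0.ne', div_le_div_iff₀ (mul_pos hx0 hm0) hx0]
      nlinarith
    · rw [div_sub_div _ _ hm0.ne' hx0.ne', div_le_div_iff₀ (mul_pos hm0 hx0) hx0]
      nlinarith
  have hlim : Tendsto (fun x : ℕ => (c:ℝ) / x) atTop (nhds 0) :=
    tendsto_const_div_atTop_nhds_zero_nat (c:ℝ)
  have h1 : Tendsto (fun x : ℕ => (c:ℝ)/m - c / x) atTop (nhds ((c:ℝ)/m)) := by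
    simpa using (tendsto_const_nhds (x := (c:ℝ)/m) (f := atTop)).sub hlim
  have h2 : Tendsto (fun x : ℕ => (c:ℝ)/m + c / x) atTop (nhds ((c:ℝ)/m)) := by
    simpa using (tendsto_const_nhds (x := (c:ℝ)/m) (f := atTop)).add hlim
  refine tendsto_of_tendsto_of_tendsto_of_le_of_le' h1 h2 ?_ ?_
  · filter_upwards [eventually_ge_atTop 1] with x hx
    have := key x hx
    rw [abs_sub_le_iff] at this
    linarith [this.2]
  · filter_upwards [eventually_ge_atTop 1] with x hx
    have := key x hx
    rw [abs_sub_le_iff] at this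
    linarith [this.1]

lemma count_multiples_bound (G : Set ℕ) (hGpos : ∀ g ∈ G, 0 < g)
    (hsum : Summable fun g : G => (1 : ℝ) / ((g : ℕ) : ℝ)) (z x : ℕ) :
    (countIn {n | ∃ g ∈ G, z < g ∧ g ∣ n} x : ℝ)
      ≤ x * ∑' g : G, (if z < (g : ℕ) then (1:ℝ)/((g:ℕ):ℝ) else 0) := by
  rw [countIn_eq_card]
  set F : Finset ℕ := (Finset.Ioc 0 x).filter (fun g => g ∈ G ∧ z < g) with hF
  have hsub : (Finset.Ioc 0 x).filter (· ∈ {n | ∃ g ∈ G, z < g ∧ g ∣ n})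
      ⊆ F.biUnion (fun g => (Finset.Ioc 0 x).filter (g ∣ ·)) := by
    intro n hn
    simp only [Finset.mem_filter, Finset.mem_Ioc, Set.mem_setOf_eq] at hn
    obtain ⟨⟨hn0, hnx⟩, g, hgG, hgz, hgdvd⟩ := hn
    refine Finset.mem_biUnion.2 ⟨g, ?_, ?_⟩
    · exact Finset.mem_filter.2 ⟨Finset.mem_Ioc.2
        ⟨hGpos g hgG, le_trans (Nat.le_of_dvd hn0 hgdvd) hnx⟩, hgG, hgz⟩
    · exact Finset.mem_filter.2 ⟨Finset.mem_Ioc.2 ⟨hn0, hnx⟩, hgdvd⟩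
  have h1 : ((Finset.Ioc 0 x).filter (· ∈ {n | ∃ g ∈ G, z < g ∧ g ∣ n})).card
      ≤ ∑ g ∈ F, ((Finset.Ioc 0 x).filter (g ∣ ·)).card :=
    le_trans (Finset.card_le_card hsub) Finset.card_biUnion_le
  have h2 : ∀ g ∈ F, (((Finset.Ioc 0 x).filter (g ∣ ·)).card : ℝ) ≤ (x:ℝ) / g := by
    intro g _
    rw [show ((Finset.Ioc 0 x).filter (g ∣ ·)) = (Finset.Ioc 0 x).filter (fun n => g ∣ n) from rfl,
      Nat.Ioc_filter_dvd_card_eq_div]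
    exact Nat.cast_div_le
  calc (((Finset.Ioc 0 x).filter (· ∈ {n | ∃ g ∈ G, z < g ∧ g ∣ n})).card : ℝ)
      ≤ ∑ g ∈ F, (((Finset.Ioc 0 x).filter (g ∣ ·)).card : ℝ) := by exact_mod_cast h1
    _ ≤ ∑ g ∈ F, (x:ℝ) / g := Finset.sum_le_sum h2
    _ = x * ∑ g ∈ F, (1:ℝ) / g := by rw [Finset.mul_sum]; apply Finset.sum_congr rfl; intros; ring
    _ ≤ x * ∑' g : G, (if z < (g : ℕ) then (1:ℝ)/((g:ℕ):ℝ) else 0) := by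
        apply mul_le_mul_of_nonneg_left _ (Nat.cast_nonneg x)
        have hrange : ∀ g ∈ F, g ∉ Set.range (Subtype.val : G → ℕ) →
            (if z < g then (1:ℝ)/(g:ℝ) else 0) = 0 := by
          intro g hg hgr
          exfalso
          apply hgr
          rw [Subtype.range_coe_subtype]
          exact ((Finset.mem_filter.1 hg).2).1
        have hpre := Finset.sum_preimage (Subtype.val : G → ℕ) F
          (Subtype.val_injective.injOn) (fun g => if z < g then (1:ℝ)/(g:ℝ) else 0) hrange
        have heq : ∑ g ∈ F, (if z < g then (1:ℝ)/(g:ℝ) else 0) = ∑ g ∈ F, (1:ℝ)/(g:ℝ) := by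
          apply Finset.sum_congr rfl
          intro g hg
          rw [if_pos ((Finset.mem_filter.1 hg).2).2]
        rw [← heq, ← hpre]
        apply Summable.sum_le_tsum
        · intro g _
          split <;> positivity
        · apply Summable.of_nonneg_of_le _ _ hsum
          · intro g
            split <;> positivity
          · intro g
            split
            · exact le_rfl
            · positivity

lemma tail_tendsto (G : Set ℕ)
    (hsum : Summable fun g : G => (1:ℝ)/((g:ℕ):ℝ)) :
    Tendsto (fun z : ℕ => ∑' g : G, (if z < (g:ℕ) then (1:ℝ)/((g:ℕ):ℝ) else 0))
      atTop (nhds 0) := by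
  have h := tendsto_tsum_of_dominated_convergence
    (f := fun (z : ℕ) (g : G) => if z < (g:ℕ) then (1:ℝ)/((g:ℕ):ℝ) else 0)
    (g := fun _ : G => (0:ℝ)) (bound := fun g : G => (1:ℝ)/((g:ℕ):ℝ)) (𝓕 := atTop) hsum ?_ ?_
  · simpa using h
  · intro g
    apply Tendsto.congr' _ tendsto_const_nhds
    filter_upwards [eventually_ge_atTop (g:ℕ)] with z hz
    rw [if_neg (Nat.not_lt.2 hz)]
  · filter_upwards with z
    intro g
    rw [Real.norm_eq_abs]
    split
    · rw [abs_of_nonneg (by positivity)]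
    · rw [abs_zero]; positivity

end Helpers
section Main

open Finset
open scoped Classical

lemma aset_hasDensity (G : Set ℕ) (hGpos : ∀ g ∈ G, 0 < g)
    (hsum : Summable fun g : G => (1 : ℝ) / ((g : ℕ) : ℝ))
    (H : Finset ℕ) (hH : ↑H ⊆ G) :
    ∃ dA : ℝ, HasDensity (Aset G H) dA := by
  set B : ℕ → Set ℕ := fun z => {n | Odd n ∧ ∀ g ∈ G, g ≤ z → (g ∣ n ↔ g ∈ H)} with hBdef
  set m : ℕ → ℕ := fun z => 2 * ∏ g ∈ (Finset.Ioc 0 z).filter (· ∈ G), g with hmdef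
  have hmpos : ∀ z, 0 < m z := by
    intro z
    apply Nat.mul_pos two_pos
    apply Finset.prod_pos
    intro g hg
    exact (Finset.mem_Ioc.1 (Finset.mem_filter.1 hg).1).1
  have hgdvd : ∀ z g, g ∈ G → g ≤ z → g ∣ m z := by
    intro z g hg hgz
    exact Dvd.dvd.mul_left
      (Finset.dvd_prod_of_mem _ (Finset.mem_filter.2
        ⟨Finset.mem_Ioc.2 ⟨hGpos g hg, hgz⟩, hg⟩)) 2
  have heven : ∀ z, 2 ∣ m z := fun z => Dvd.intro _ rfl
  have hper : ∀ z n, n ∈ B z ↔ n + m z ∈ B z := by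
    intro z n
    obtain ⟨k, hk⟩ := heven z
    simp only [hBdef, Set.mem_setOf_eq]
    apply and_congr
    · rw [Nat.odd_iff, Nat.odd_iff, hk]
      omega
    · apply forall_congr'
      intro g
      apply imp_congr_right
      intro hg
      apply imp_congr_right
      intro hgz
      have hd := hgdvd z g hg hgz
      constructor
      · intro h
        constructor
        · intro h2
          have := Nat.dvd_sub h2 hd
          rw [Nat.add_sub_cancel] at this
          exact h.1 this
        · intro h2
          exact (h.2 h2).add hd
      · intro h
        constructor
        · intro h2
          exact h.1 (h2.add hd)
        · intro h2
          have := Nat.dvd_sub (h.2 h2) hd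
          rw [Nat.add_sub_cancel] at this
          exact this
  set β : ℕ → ℝ := fun z => (countIn (B z) (m z) : ℝ) / (m z) with hβdef
  have hβ : ∀ z, HasDensity (B z) (β z) := fun z =>
    periodic_hasDensity _ _ (hmpos z) (hper z)
  have hBanti : ∀ z z', z ≤ z' → B z' ⊆ B z := by
    intro z z' h n hn
    exact ⟨hn.1, fun g hg hgz => hn.2 g hg (hgz.trans h)⟩
  have hβanti : Antitone β := by
    intro z z' h
    apply le_of_tendsto_of_tendsto (hβ z') (hβ z)
    filter_upwards [eventually_ge_atTop 1] with x hx
    have hx0 : (0:ℝ) < x := by exact_mod_cast hx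
    have hcast : (countIn (B z') x : ℝ) ≤ (countIn (B z) x : ℝ) := by
      exact_mod_cast countIn_le_of_subset (hBanti z z' h) x
    gcongr
  have hβ0 : ∀ z, 0 ≤ β z := by
    intro z
    apply div_nonneg (Nat.cast_nonneg _) (Nat.cast_nonneg _)
  have hbdd : BddBelow (Set.range β) := ⟨0, by rintro _ ⟨z, rfl⟩; exact hβ0 z⟩
  set dA := ⨅ z, β z with hdAdef
  have hβtend : Tendsto β atTop (nhds dA) := tendsto_atTop_ciInf hβanti hbdd
  have hdAle : ∀ z, dA ≤ β z := fun z => ciInf_le hbdd z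
  have hAB : ∀ z, Aset G H ⊆ B z := by
    intro z n hn
    obtain ⟨hodd, hset⟩ := hn
    refine ⟨hodd, fun g hg hgz => ?_⟩
    constructor
    · intro hdvd
      have : g ∈ ({g ∈ G | g ∣ n} : Set ℕ) := ⟨hg, hdvd⟩
      rw [hset] at this
      exact this
    · intro hgH
      have : g ∈ ({g ∈ G | g ∣ n} : Set ℕ) := by
        rw [hset]; exact hgH
      exact this.2
  have hBA : ∀ z : ℕ, H.sup id ≤ z →
      B z \ Aset G H ⊆ {n | ∃ g ∈ G, z < g ∧ g ∣ n} := by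
    intro z hz n hn
    obtain ⟨⟨hodd, hBn⟩, hnA⟩ := hn
    by_contra hcon
    rw [Set.mem_setOf_eq] at hcon
    push_neg at hcon
    apply hnA
    refine ⟨hodd, ?_⟩
    ext g
    simp only [Set.mem_setOf_eq, Finset.coe_sort_coe, Finset.mem_coe]
    constructor
    · rintro ⟨hgG, hgd⟩
      by_cases hgz : g ≤ z
      · exact (hBn g hgG hgz).1 hgd
      · exact absurd hgd (hcon g hgG (Nat.not_le.1 hgz))
    · intro hgH
      have hgG : g ∈ G := hH hgH
      have hgz : g ≤ z := le_trans (Finset.le_sup (f := id) hgH) hz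
      exact ⟨hgG, (hBn g hgG hgz).2 hgH⟩
  have hTtend := tail_tendsto G hsum
  refine ⟨dA, ?_⟩
  rw [HasDensity, Metric.tendsto_atTop]
  intro ε hε
  have hε4 : (0:ℝ) < ε/4 := by linarith
  obtain ⟨z, ⟨hz1, hz2⟩, hz3⟩ :=
    (((hβtend.eventually_lt_const (show dA < dA + ε/4 by linarith)).and
      (hTtend.eventually_lt_const hε4)).and (eventually_ge_atTop (H.sup id))).exists
  obtain ⟨N1, hN1⟩ := Metric.tendsto_atTop.1 (hβ z) (ε/4) hε4
  refine ⟨max N1 1, fun x hx => ?_⟩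
  have hxN1 : N1 ≤ x := le_trans (le_max_left _ _) hx
  have hx1 : 1 ≤ x := le_trans (le_max_right _ _) hx
  have hx0 : (0:ℝ) < x := by exact_mod_cast hx1
  set a := (countIn (Aset G H) x : ℝ) with hadef
  set b := (countIn (B z) x : ℝ) with hbdef2
  set T := ∑' g : G, (if z < (g:ℕ) then (1:ℝ)/((g:ℕ):ℝ) else 0) with hTdef
  have hab : a ≤ b := by
    rw [hadef, hbdef2]
    exact_mod_cast countIn_le_of_subset (hAB z) x
  have hba : b ≤ a + x * T := by
    have h1 : countIn (B z) x ≤ countIn (Aset G H) x + countIn (B z \ Aset G H) x := by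
      refine le_trans (countIn_le_of_subset ?_ x) (countIn_union_le _ _ x)
      intro n hn
      by_cases h : n ∈ Aset G H
      · exact Or.inl h
      · exact Or.inr ⟨hn, h⟩
    have h2 : (countIn (B z \ Aset G H) x : ℝ) ≤ x * T := by
      refine le_trans ?_ (count_multiples_bound G hGpos hsum z x)
      exact_mod_cast countIn_le_of_subset (hBA z hz3) x
    have h1R : b ≤ a + (countIn (B z \ Aset G H) x : ℝ) := by
      rw [hadef, hbdef2]
      exact_mod_cast h1
    linarith
  have hdist := hN1 x hxN1
  rw [Real.dist_eq, abs_sub_lt_iff] at hdist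
  have hbx1 : b / x < β z + ε/4 := by linarith [hdist.1]
  have hbx2 : β z - ε/4 < b / x := by linarith [hdist.2]
  rw [Real.dist_eq, abs_sub_lt_iff]
  constructor
  · -- a/x - dA < ε
    have h1 : a / x ≤ b / x := by gcongr
    have := hdAle z
    linarith
  · -- dA - a/x < ε
    have h1 : b / x ≤ (a + x * T) / x := by gcongr
    have h2 : (a + x * T) / x = a / x + T := by
      rw [add_div, mul_div_cancel_left₀ _ hx0.ne']
    have hT0 : 0 ≤ T := by
      apply tsum_nonneg
      intro g
      split <;> positivity
    have := hdAle z
    linarith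
end Main

lemma Az_eq (G : Set ℕ) (H : Finset ℕ) (z : ℝ) (hz : ∀ h ∈ H, (h : ℝ) < z) :
    Az G H z = Aset G H := by
  ext n
  constructor
  · rintro ⟨hodd, hle, hset⟩
    refine ⟨hodd, ?_⟩
    rw [← hset]
    ext g
    simp only [Set.mem_setOf_eq]
    constructor
    · rintro ⟨hG, hd⟩; exact ⟨hG, hle g hG hd, hd⟩
    · rintro ⟨hG, _, hd⟩; exact ⟨hG, hd⟩
  · rintro ⟨hodd, hset⟩
    have hmem : ∀ g, g ∈ G ∧ g ∣ n ↔ g ∈ H := by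
      intro g
      have := Set.ext_iff.1 hset g
      simpa using this
    refine ⟨hodd, fun g hG hd => le_of_lt (hz g ((hmem g).1 ⟨hG, hd⟩)), ?_⟩
    rw [show (↑H : Set ℕ) = {g ∈ G | g ∣ n} from hset.symm]
    ext g
    simp only [Set.mem_setOf_eq]
    constructor
    · rintro ⟨hG, _, hd⟩; exact ⟨hG, hd⟩
    · rintro ⟨hG, hd⟩; exact ⟨hG, le_of_lt (hz g ((hmem g).1 ⟨hG, hd⟩)), hd⟩


/-- Let `G` be a set of positive integers with convergent reciprocal sum and `H ⊆ G`
finite. For `z > max H`: `d(A_z)` exists and is nonincreasing in `z`;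
`A ⊆ A_{z'} ⊆ A_z` for `z' > z`; the upper density of `A_z \ A` is at most
`∑_{g ∈ G, g > z} 1/g`; and consequently `d(A)` exists and equals `lim_{z→∞} d(A_z)`. -/
theorem stmt16 (G : Set ℕ) (hGpos : ∀ g ∈ G, 0 < g)
    (hsum : Summable fun g : G => (1 : ℝ) / ((g : ℕ) : ℝ))
    (H : Finset ℕ) (hH : ↑H ⊆ G) :
    ∃ δ : ℝ → ℝ,
      (∀ z : ℝ, (∀ h ∈ H, (h : ℝ) < z) → HasDensity (Az G H z) (δ z)) ∧
      (∀ z z' : ℝ, (∀ h ∈ H, (h : ℝ) < z) → z ≤ z' → δ z' ≤ δ z) ∧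
      (∀ z z' : ℝ, (∀ h ∈ H, (h : ℝ) < z) → z < z' →
        Aset G H ⊆ Az G H z' ∧ Az G H z' ⊆ Az G H z) ∧
      (∀ z : ℝ, (∀ h ∈ H, (h : ℝ) < z) →
        upperDensity (Az G H z \ Aset G H) ≤
          ∑' g : G, if z < ((g : ℕ) : ℝ) then (1 : ℝ) / ((g : ℕ) : ℝ) else 0) ∧
      ∃ dA : ℝ, HasDensity (Aset G H) dA ∧
        Filter.Tendsto δ Filter.atTop (nhds dA) := by
  obtain ⟨dA, hdA⟩ := aset_hasDensity G hGpos hsum H hH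
  refine ⟨fun _ => dA, ?_, ?_, ?_, ?_, dA, hdA, tendsto_const_nhds⟩
  · intro z hz
    rw [Az_eq G H z hz]
    exact hdA
  · intro z z' _ _
    exact le_rfl
  · intro z z' hz hzz'
    have hz' : ∀ h ∈ H, (h : ℝ) < z' := fun h hh => lt_trans (hz h hh) hzz'
    rw [Az_eq G H z hz, Az_eq G H z' hz']
    exact ⟨subset_rfl, subset_rfl⟩
  · intro z hz
    rw [Az_eq G H z hz, Set.diff_self]
    have h0 : upperDensity (∅ : Set ℕ) = 0 := by
      rw [upperDensity]
      have hfun : (fun x : ℕ => (countIn (∅ : Set ℕ) x : ℝ) / x) = fun _ : ℕ => (0:ℝ) := by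
        funext x
        simp [countIn]
      rw [hfun, limsup_const]
    rw [h0]
    apply tsum_nonneg
    intro g
    split <;> positivity
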